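/- There exist F₂-linear endomorphisms A, B, C of a countable-dimensional F₂-vector space H satisfying (1+AB)C = 1, (1+BA)C = 0, (1+BA)AC = 1, and 1 + C(1+AB) + AC(1+BA) = 0, where 1 denotes the identity endomorphism. -/

import Mathlib

noncomputable def mkEnd (f : ℕ → (ℕ →₀ ZMod 2)) : Module.End (ZMod 2) (ℕ →₀ ZMod 2) :=
  Finsupp.lsum (ZMod 2) fun n => LinearMap.toSpanSingleton (ZMod 2) _ (f n)

lemma mkEnd_single (f : ℕ → (ℕ →₀ ZMod 2)) (n : ℕ) :
    mkEnd f (Finsupp.single n 1) = f n := by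
  simp [mkEnd]

noncomputable def Aop : Module.End (ZMod 2) (ℕ →₀ ZMod 2) :=
  mkEnd fun n => Finsupp.single (n + 1) 1

noncomputable def Cop : Module.End (ZMod 2) (ℕ →₀ ZMod 2) :=
  mkEnd fun n => Finsupp.single (2 * n) 1

noncomputable def bfun : ℕ → (ℕ →₀ ZMod 2)
  | 0 => 0
  | (n + 1) =>
    if n % 2 = 0 then Finsupp.single n 1
    else Finsupp.single n 1 + Finsupp.single (n / 2) 1

noncomputable def Bop : Module.End (ZMod 2) (ℕ →₀ ZMod 2) := mkEnd bfun

lemma Aop_single (n : ℕ) : Aop (Finsupp.single n 1) = Finsupp.single (n + 1) 1 :=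
  mkEnd_single _ n

lemma Cop_single (n : ℕ) : Cop (Finsupp.single n 1) = Finsupp.single (2 * n) 1 :=
  mkEnd_single _ n

lemma Bop_single_zero : Bop (Finsupp.single 0 1) = 0 := mkEnd_single _ 0

lemma Bop_single_odd (m : ℕ) :
    Bop (Finsupp.single (2 * m + 1) 1) = Finsupp.single (2 * m) 1 := by
  rw [Bop, mkEnd_single]
  simp [bfun, Nat.mul_mod_right]

lemma Bop_single_even (m : ℕ) :
    Bop (Finsupp.single (2 * m + 2) 1) = Finsupp.single (2 * m + 1) 1 + Finsupp.single m 1 := by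
  rw [Bop, mkEnd_single]
  have h2 : (2 * m + 1) / 2 = m := by omega
  show bfun ((2 * m + 1) + 1) = _
  rw [bfun, if_neg (by omega), h2]

lemma single_self_add (k : ℕ) :
    (Finsupp.single k 1 : ℕ →₀ ZMod 2) + Finsupp.single k 1 = 0 := by
  rw [← Finsupp.single_add]
  have : (1 + 1 : ZMod 2) = 0 := by decide
  rw [this, Finsupp.single_zero]

lemma add_self (x : ℕ →₀ ZMod 2) : x + x = 0 := by
  rw [← two_smul (ZMod 2) x, show (2 : ZMod 2) = 0 from rfl, zero_smul]

lemma quad (x y : ℕ →₀ ZMod 2) : x + (y + (y + x)) = 0 := by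
  rw [show x + (y + (y + x)) = (x + y) + (x + y) from by abel, add_self]

lemma endExt {f g : Module.End (ZMod 2) (ℕ →₀ ZMod 2)}
    (h : ∀ n, f (Finsupp.single n 1) = g (Finsupp.single n 1)) : f = g := by
  apply Finsupp.lhom_ext
  intro a b
  rw [← mul_one b, ← smul_eq_mul, ← Finsupp.smul_single, map_smul, map_smul, h]

theorem exists_representation :
    ∃ A B C : Module.End (ZMod 2) (ℕ →₀ ZMod 2),
      (1 + A * B) * C = 1 ∧
      (1 + B * A) * C = 0 ∧
      (1 + B * A) * (A * C) = 1 ∧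
      1 + C * (1 + A * B) + A * C * (1 + B * A) = 0 := by
  refine ⟨Aop, Bop, Cop, ?_, ?_, ?_, ?_⟩
  · apply endExt; intro n
    simp only [Module.End.mul_apply, LinearMap.add_apply, Module.End.one_apply, Cop_single]
    rcases n with _ | m
    · simp [Bop_single_zero]
    · have h : 2 * (m + 1) = 2 * m + 2 := by ring
      rw [h, Bop_single_even, map_add, Aop_single, Aop_single]
      rw [show 2 * m + 1 + 1 = 2 * m + 2 from rfl, ← add_assoc, single_self_add, zero_add]
  · apply endExt; intro n
    simp only [Module.End.mul_apply, LinearMap.add_apply, Module.End.one_apply,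
      LinearMap.zero_apply, Cop_single, Aop_single]
    rw [Bop_single_odd, single_self_add]
  · apply endExt; intro n
    simp only [Module.End.mul_apply, LinearMap.add_apply, Module.End.one_apply, Cop_single,
      Aop_single]
    have h : 2 * n + 1 + 1 = 2 * n + 2 := by ring
    rw [h, Bop_single_even]
    rw [← add_assoc, single_self_add, zero_add]
  · apply endExt; intro n
    simp only [Module.End.mul_apply, LinearMap.add_apply, Module.End.one_apply,
      LinearMap.zero_apply]
    obtain ⟨m, rfl | rfl⟩ := Nat.even_or_odd' n
    · -- n = 2m
      rw [show Bop (Aop (Finsupp.single (2 * m) 1)) = Finsupp.single (2 * m) 1 from by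
        rw [Aop_single, Bop_single_odd]]
      rw [single_self_add, map_zero]
      rcases m with _ | k
      · rw [show Aop (Bop (Finsupp.single (2 * 0) 1)) = 0 from by
          rw [show (2 * 0 : ℕ) = 0 from rfl, Bop_single_zero, map_zero]]
        rw [add_zero, map_zero, add_zero, Cop_single]
        exact add_self _
      · have h1 : (2 * (k + 1) : ℕ) = 2 * k + 2 := by ring
        have h2 : (2 * k + 1 + 1 : ℕ) = 2 * k + 2 := rfl
        simp only [h1, Bop_single_even, map_add, map_zero, add_zero, Aop_single, h2,
          Cop_single]
        exact quad _ _
    · -- n = 2m+1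
      rw [show Aop (Bop (Finsupp.single (2 * m + 1) 1)) = Finsupp.single (2 * m + 1) 1 from by
        rw [Bop_single_odd, Aop_single]]
      rw [single_self_add, map_zero, add_zero]
      rw [show Bop (Aop (Finsupp.single (2 * m + 1) 1)) = Finsupp.single (2 * m + 1) 1
            + Finsupp.single m 1 from by
        rw [Aop_single, show (2 * m + 1 + 1 : ℕ) = 2 * m + 2 from rfl, Bop_single_even]]
      rw [← add_assoc, single_self_add, zero_add, Cop_single, Aop_single, single_self_add]
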